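/- Let f : ℝⁿ → ℝⁿ be an analytic vector field, let D ⊆ ℝⁿ be a domain, X₀ ⊆ ℝⁿ an initial set and U ⊆ ℝⁿ an unsafe set. Let φ : ℝⁿ → ℝ and ψ : ℝ → ℝ be analytic and assume: (1) φ(x) ≤ 0 for all x ∈ X₀; (2) L_f φ(x) − ψ(φ(x)) ≤ 0 for all x ∈ D; (3) φ(x) > 0 for all x ∈ U; (4) every analytic function θ : [0,∞) → ℝ satisfying θ′(t) = ψ(θ(t)) for all t ≥ 0 and θ(0) ≤ 0 also satisfies θ(ξ) ≤ 0 for all ξ > 0; and (5) for every c ≤ 0 there exists an analytic θ : [0,∞) → ℝ with θ′(t) = ψ(θ(t)) for all t ≥ 0 and θ(0) = c. Then every differentiable trajectory x : [0,∞) → ℝⁿ with x′(t) = f(x(t)) for all t ≥ 0, x(0) ∈ X₀ and x(t) ∈ D for all t ≥ 0 satisfies φ(x(t)) ≤ 0 for all t ≥ 0; in particular x(t) ∉ U for all t ≥ 0. -/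

import Mathlib

open Set

/-- Comparison lemma: if `g' ≤ ψ ∘ g` (pointwise on `[0,T]`), `θ' = ψ ∘ θ`,
`ψ` is locally Lipschitz (here: analytic), and `g 0 ≤ θ 0`, then `g ≤ θ` on `[0,T]`. -/
lemma gbc_comparison {ψ g θ : ℝ → ℝ} {g' : ℝ → ℝ} {T : ℝ} (hT : 0 ≤ T)
    (hψa : ∀ y, AnalyticAt ℝ ψ y)
    (hg : ∀ t ∈ Icc (0:ℝ) T, HasDerivAt g (g' t) t)
    (hgb : ∀ t ∈ Icc (0:ℝ) T, g' t ≤ ψ (g t))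
    (hθ : ∀ t ∈ Icc (0:ℝ) T, HasDerivAt θ (ψ (θ t)) t)
    (h0 : g 0 ≤ θ 0) : ∀ t ∈ Icc (0:ℝ) T, g t ≤ θ t := by
  -- continuity of g and θ on [0,T]
  have hgc : ContinuousOn g (Icc 0 T) := fun t ht => (hg t ht).continuousAt.continuousWithinAt
  have hθc : ContinuousOn θ (Icc 0 T) := fun t ht => (hθ t ht).continuousAt.continuousWithinAt
  -- compact set containing the images of g and θ
  have hIcc : IsCompact (Icc (0:ℝ) T) := isCompact_Icc
  obtain ⟨M, hM⟩ : ∃ M, ∀ t ∈ Icc (0:ℝ) T, g t ≤ M ∧ θ t ≤ M := by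
    obtain ⟨Mg, hMg⟩ := hIcc.exists_bound_of_continuousOn hgc
    obtain ⟨Mθ, hMθ⟩ := hIcc.exists_bound_of_continuousOn hθc
    exact ⟨max Mg Mθ, fun t ht => ⟨le_trans (le_abs_self _) (le_trans (hMg t ht) (le_max_left _ _)),
      le_trans (le_abs_self _) (le_trans (hMθ t ht) (le_max_right _ _))⟩⟩
  obtain ⟨m, hm⟩ : ∃ m, ∀ t ∈ Icc (0:ℝ) T, m ≤ g t ∧ m ≤ θ t := by
    obtain ⟨Mg, hMg⟩ := hIcc.exists_bound_of_continuousOn hgc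
    obtain ⟨Mθ, hMθ⟩ := hIcc.exists_bound_of_continuousOn hθc
    refine ⟨-(max Mg Mθ), fun t ht => ⟨?_, ?_⟩⟩
    · have := abs_le.mp (le_trans (hMg t ht) (le_max_left Mg Mθ))
      linarith [this.1]
    · have := abs_le.mp (le_trans (hMθ t ht) (le_max_right Mg Mθ))
      linarith [this.1]
  set S : Set ℝ := Icc m M with hS
  have hScompact : IsCompact S := isCompact_Icc
  have hSconv : Convex ℝ S := convex_Icc _ _
  -- ψ is Lipschitz on S with some constant K ≥ 0
  have hψd : ∀ y, DifferentiableAt ℝ ψ y := fun y => (hψa y).differentiableAt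
  have hψA : AnalyticOnNhd ℝ ψ univ := fun y _ => hψa y
  have hderivA : AnalyticOnNhd ℝ (deriv ψ) univ := hψA.deriv
  have hderivc : ContinuousOn (deriv ψ) S :=
    fun y _ => ((hderivA y (mem_univ y)).continuousAt).continuousWithinAt
  obtain ⟨K₀, hK₀⟩ := hScompact.exists_bound_of_continuousOn hderivc
  set K : ℝ := max K₀ 0 with hK
  have hKnn : 0 ≤ K := le_max_right _ _
  have hlip : ∀ a ∈ S, ∀ b ∈ S, |ψ b - ψ a| ≤ K * |b - a| := by
    intro a ha b hb
    have hbd : ∀ y ∈ S, ‖deriv ψ y‖ ≤ K := fun y hy => le_trans (hK₀ y hy) (le_max_left _ _)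
    have := hSconv.norm_image_sub_le_of_norm_hasDerivWithin_le
      (f' := deriv ψ) (C := K) (fun y _ => (hψd y).hasDerivAt.hasDerivWithinAt) hbd ha hb
    simpa [Real.norm_eq_abs] using this
  -- the key estimate: for every ε > 0, g t - θ t ≤ ε * exp ((K+1) t) on [0,T]
  have key : ∀ ε > (0:ℝ), ∀ t ∈ Icc (0:ℝ) T, g t - θ t ≤ ε * Real.exp ((K + 1) * t) := by
    intro ε hε
    have := image_le_of_deriv_right_lt_deriv_boundary
      (f := fun t => g t - θ t) (f' := fun t => g' t - ψ (θ t)) (a := 0) (b := T)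
      (B := fun t => ε * Real.exp ((K + 1) * t))
      (B' := fun t => ε * ((K + 1) * Real.exp ((K + 1) * t)))
      (hgc.sub hθc)
      (fun t ht => ((hg t (Ico_subset_Icc_self ht)).sub
        (hθ t (Ico_subset_Icc_self ht))).hasDerivWithinAt)
      (by
        simp only [mul_zero, Real.exp_zero, mul_one]
        linarith)
      (fun s => by
        have h1 : HasDerivAt (fun u : ℝ => (K + 1) * u) (K + 1) s := by
          simpa using (hasDerivAt_id s).const_mul (K + 1)
        have h2 := h1.exp
        have h3 := h2.const_mul ε
        exact h3.congr_deriv (by ring))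
      ?_
    · exact fun t ht => this ht
    · intro t ht heq0
      have heq : g t - θ t = ε * Real.exp ((K + 1) * t) := heq0
      have htI : t ∈ Icc (0:ℝ) T := Ico_subset_Icc_self ht
      have hBpos : 0 < ε * Real.exp ((K + 1) * t) := mul_pos hε (Real.exp_pos _)
      have hgt : θ t < g t := by
        have h0' : 0 < g t - θ t := by rw [heq]; exact hBpos
        linarith
      have hgS : g t ∈ S := ⟨(hm t htI).1, (hM t htI).1⟩
      have hθS : θ t ∈ S := ⟨(hm t htI).2, (hM t htI).2⟩
      have hψle : ψ (g t) - ψ (θ t) ≤ K * (g t - θ t) := by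
        have h1 := hlip (θ t) hθS (g t) hgS
        have h2 : |g t - θ t| = g t - θ t := abs_of_pos (by linarith)
        calc ψ (g t) - ψ (θ t) ≤ |ψ (g t) - ψ (θ t)| := le_abs_self _
          _ ≤ K * |g t - θ t| := h1
          _ = K * (g t - θ t) := by rw [h2]
      have hgb' := hgb t htI
      show g' t - ψ (θ t) < ε * ((K + 1) * Real.exp ((K + 1) * t))
      have hstep : g' t - ψ (θ t) ≤ K * (g t - θ t) := by linarith
      rw [heq] at hstep
      nlinarith
  -- conclude by letting ε → 0
  intro t ht
  have hC : 0 < Real.exp ((K + 1) * t) := Real.exp_pos _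
  have : ∀ δ > (0:ℝ), g t - θ t ≤ δ := by
    intro δ hδ
    have hε : 0 < δ / Real.exp ((K + 1) * t) := div_pos hδ hC
    have := key _ hε t ht
    calc g t - θ t ≤ δ / Real.exp ((K + 1) * t) * Real.exp ((K + 1) * t) := this
      _ = δ := div_mul_cancel₀ δ (ne_of_gt hC)
  have hle : g t - θ t ≤ 0 := by
    by_contra h
    push_neg at h
    have := this ((g t - θ t) / 2) (by linarith)
    linarith
  linarith

/-- **General Barrier Condition (GBC)** for a continuous dynamical system
`ẋ = f(x)` with domain `D`, initial set `X₀` and unsafe set `U`.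
The Lie derivative of `φ` along `f` at `x` is `fderiv ℝ φ x (f x)`. -/
theorem general_barrier_condition {n : ℕ}
    (f : (Fin n → ℝ) → (Fin n → ℝ)) (D X₀ U : Set (Fin n → ℝ))
    (φ : (Fin n → ℝ) → ℝ) (ψ : ℝ → ℝ)
    (hf : ∀ x, AnalyticAt ℝ f x)
    (hφa : ∀ x, AnalyticAt ℝ φ x)
    (hψa : ∀ y, AnalyticAt ℝ ψ y)
    (h1 : ∀ x ∈ X₀, φ x ≤ 0)
    (h2 : ∀ x ∈ D, fderiv ℝ φ x (f x) - ψ (φ x) ≤ 0)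
    (h3 : ∀ x ∈ U, 0 < φ x)
    (h4 : ∀ θ : ℝ → ℝ, (∀ t, AnalyticAt ℝ θ t) →
      (∀ t ≥ (0:ℝ), deriv θ t = ψ (θ t)) → θ 0 ≤ 0 →
      ∀ ξ > (0:ℝ), θ ξ ≤ 0)
    (h5 : ∀ c ≤ (0:ℝ), ∃ θ : ℝ → ℝ, (∀ t, AnalyticAt ℝ θ t) ∧
      (∀ t ≥ (0:ℝ), deriv θ t = ψ (θ t)) ∧ θ 0 = c) :
    ∀ x : ℝ → (Fin n → ℝ),
      (∀ t ≥ (0:ℝ), HasDerivAt x (f (x t)) t) →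
      x 0 ∈ X₀ → (∀ t ≥ (0:ℝ), x t ∈ D) →
      (∀ t ≥ (0:ℝ), φ (x t) ≤ 0) ∧ (∀ t ≥ (0:ℝ), x t ∉ U) := by
  intro x hx hx0 hxD
  have hgd : ∀ t ≥ (0:ℝ), HasDerivAt (fun s => φ (x s)) (fderiv ℝ φ (x t) (f (x t))) t :=
    fun t ht => ((hφa (x t)).differentiableAt.hasFDerivAt).comp_hasDerivAt t (hx t ht)
  have main : ∀ t ≥ (0:ℝ), φ (x t) ≤ 0 := by
    intro T hT
    rcases eq_or_lt_of_le hT with h | h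
    · exact h ▸ h1 _ hx0
    · obtain ⟨θ, hθa, hθd, hθ0⟩ := h5 (φ (x 0)) (h1 _ hx0)
      have hθhas : ∀ t ∈ Icc (0:ℝ) T, HasDerivAt θ (ψ (θ t)) t := by
        intro t ht
        have hd := (hθa t).differentiableAt.hasDerivAt
        rwa [hθd t ht.1] at hd
      have hcomp := gbc_comparison (le_of_lt h) hψa
        (g' := fun t => fderiv ℝ φ (x t) (f (x t)))
        (fun t ht => hgd t ht.1)
        (fun t ht => by have := h2 (x t) (hxD t ht.1); linarith)
        hθhas (by rw [hθ0])
      have hgT := hcomp T ⟨le_of_lt h, le_refl T⟩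
      have hθT := h4 θ hθa hθd (by rw [hθ0]; exact h1 _ hx0) T h
      simpa using hgT.trans hθT
  exact ⟨main, fun t ht hU => absurd (main t ht) (not_le.mpr (h3 _ hU))⟩
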